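/- arXiv:0910.2786 — 4 statements merged into one kernel-verified Lean document; each statement's English description precedes it below -/
import Mathlib

section
/- Let ε > 0, λ ≥ 0 with λ ≤ Cε, and let κ : ℝ₊ → ℝ be measurable with |κ(s)| ≤ C₀ uniformly. Then for any real numbers E and α with E ≠ α, |∫₀^∞ ds e^{-is(E-α)} e^{-εs} e^{-iλ∫_τ^{τ+s} κ(s')ds'}| ≤ C'/( |E-α| + ε ), uniformly in τ ≥ 0, where C' depends only on C, C₀. -/
open MeasureTheory

private lemma chord_aux (x y : ℝ) :
    ‖Complex.exp ((x : ℂ) * Complex.I) - Complex.exp ((y : ℂ) * Complex.I)‖ ≤ |x - y| := by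
  have hder : ∀ t : ℝ, HasDerivAt (fun u : ℝ => Complex.exp ((u : ℂ) * Complex.I))
      (Complex.exp ((t : ℂ) * Complex.I) * Complex.I) t := by
    intro t
    have h1 : HasDerivAt (fun u : ℝ => (u : ℂ) * Complex.I) Complex.I t := by
      simpa using (Complex.ofRealCLM.hasDerivAt (x := t)).mul_const Complex.I
    simpa using h1.cexp
  have := convex_univ.norm_image_sub_le_of_norm_hasDerivWithin_le
    (f := fun u : ℝ => Complex.exp ((u : ℂ) * Complex.I))
    (f' := fun t : ℝ => Complex.exp ((t : ℂ) * Complex.I) * Complex.I) (C := 1)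
    (fun t _ => (hder t).hasDerivWithinAt)
    (fun t _ => by simp [Complex.norm_exp]) (Set.mem_univ y) (Set.mem_univ x)
  simpa [Real.norm_eq_abs] using this

/-- Phase cancellation lemma (scalar core): for `ε > 0`, `0 ≤ λ ≤ Cε`, and a
measurable `κ` with `|κ(s)| ≤ C₀`, for any reals `E ≠ α`,
`|∫₀^∞ ds e^{-is(E-α)} e^{-εs} e^{-iλ∫_τ^{τ+s}κ(s')ds'}| ≤ C' / (|E-α| + ε)`,
uniformly in `τ ≥ 0`, where `C'` depends only on `C, C₀`. -/
theorem phase_cancellation (C C₀ : ℝ) (hC : 0 ≤ C) (hC₀ : 0 ≤ C₀) :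
    ∃ C' : ℝ, 0 < C' ∧
      ∀ (ε lam τ E α : ℝ) (κ : ℝ → ℝ),
        0 < ε → 0 ≤ lam → lam ≤ C * ε →
        Measurable κ → (∀ s, |κ s| ≤ C₀) →
        0 ≤ τ → E ≠ α →
        ‖∫ s in Set.Ioi (0 : ℝ),
            Complex.exp (-Complex.I * s * ((E : ℂ) - α)) * Complex.exp (-(ε * s))
              * Complex.exp (-Complex.I * lam * (∫ t in τ..(τ + s), (κ t : ℂ)))‖
          ≤ C' / (|E - α| + ε) := by
  refine ⟨Real.pi * (C * C₀ + 2) + 2, by positivity, ?_⟩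
  intro ε lam τ E α κ hε hlam hlamC hκm hκb hτ hne
  set d : ℝ := E - α with hd
  have hd0 : d ≠ 0 := sub_ne_zero.2 hne
  have habs : 0 < |d| := abs_pos.2 hd0
  set ζ : ℝ := Real.pi / |d| with hζdef
  have hζ : 0 < ζ := div_pos Real.pi_pos habs
  -- κ is interval integrable
  have hκint : ∀ a b : ℝ, IntervalIntegrable κ volume a b := by
    intro a b
    rw [intervalIntegrable_iff]
    exact Measure.integrableOn_of_bounded measure_Ioc_lt_top.ne
      hκm.aestronglyMeasurable (Filter.Eventually.of_forall fun x => by simpa using hκb x)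
  set K : ℝ → ℝ := fun s => ∫ t in τ..(τ + s), κ t with hK
  have hKc : Continuous K :=
    (intervalIntegral.continuous_primitive hκint τ).comp (continuous_const.add continuous_id)
  set P : ℝ → ℂ := fun s => Complex.exp ((↑(-(s * d)) : ℂ) * Complex.I)
      * Complex.exp ((↑(-(ε * s)) : ℂ)) with hP
  set g : ℝ → ℂ := fun s => Complex.exp ((↑(-(lam * K s)) : ℂ) * Complex.I) with hg
  set F : ℝ → ℂ := fun s => P s * g s with hF
  -- rewrite the integrand as F
  have hrepr : ∀ s : ℝ,
      Complex.exp (-Complex.I * s * ((E:ℂ) - α)) * Complex.exp (-(ε*s))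
        * Complex.exp (-Complex.I * lam * (∫ t in τ..(τ+s), (κ t : ℂ))) = F s := by
    intro s
    rw [intervalIntegral.integral_ofReal]
    show _ = P s * g s
    rw [hP, hg]
    rw [show -Complex.I * s * ((E:ℂ) - α) = (↑(-(s*d)) : ℂ) * Complex.I by
          rw [hd]; push_cast; ring,
        show (-(↑ε*(↑s:ℂ)) : ℂ) = (↑(-(ε*s)) : ℂ) by push_cast; ring,
        show (∫ x in τ..(τ+s), κ x) = K s from rfl,
        show -Complex.I * lam * ((K s : ℝ) : ℂ) = (↑(-(lam * K s)) : ℂ) * Complex.I by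
          push_cast; ring]
  -- norms
  have hPnorm : ∀ s : ℝ, ‖P s‖ = Real.exp (-(ε * s)) := by
    intro s
    rw [hP, norm_mul]
    simp [Complex.norm_exp]
  have hgnorm : ∀ s : ℝ, ‖g s‖ = 1 := by
    intro s; rw [hg]; simp [Complex.norm_exp]
  have hFnorm : ∀ s : ℝ, ‖F s‖ = Real.exp (-(ε * s)) := by
    intro s; rw [hF, norm_mul, hPnorm, hgnorm, mul_one]
  -- continuity and integrability
  have hPc : Continuous P := by
    rw [hP]
    fun_prop
  have hgc : Continuous g := by
    rw [hg]
    have : Continuous fun s : ℝ => (↑(-(lam * K s)) : ℂ) * Complex.I := by fun_prop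
    exact Complex.continuous_exp.comp this
  have hFc : Continuous F := by rw [hF]; exact hPc.mul hgc
  have hexpint : IntegrableOn (fun x : ℝ => Real.exp (-(ε * x))) (Set.Ioi 0) := by
    have := exp_neg_integrableOn_Ioi 0 hε
    simpa [neg_mul] using this
  have hFint : IntegrableOn F (Set.Ioi 0) := by
    apply Integrable.mono hexpint (hFc.aestronglyMeasurable.restrict)
    exact Filter.Eventually.of_forall fun s => by
      rw [hFnorm, Real.norm_eq_abs, Real.abs_exp]
  -- the trivial bound
  have hexpval : ∫ x in Set.Ioi (0:ℝ), Real.exp (-(ε * x)) = 1/ε := by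
    have h := integral_comp_mul_left_Ioi (fun x => Real.exp (-x)) 0 hε
    simp only [mul_zero] at h
    rw [show (fun x : ℝ => Real.exp (-(ε * x))) = fun x => Real.exp (-(ε * x)) from rfl]
    calc ∫ x in Set.Ioi (0:ℝ), Real.exp (-(ε * x)) = ε⁻¹ • ∫ x in Set.Ioi (0:ℝ), Real.exp (-x) := h
    _ = 1/ε := by rw [integral_exp_neg_Ioi_zero]; simp [one_div]
  have htriv : ‖∫ s in Set.Ioi (0:ℝ), F s‖ ≤ 1/ε := by
    rw [← hexpval]
    exact norm_integral_le_of_norm_le hexpint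
      (Filter.Eventually.of_forall fun s => (hFnorm s).le)
    -- phase flip: exp(-i ζ d) = -1
  have hζd : Complex.exp ((↑(-(ζ * d)) : ℂ) * Complex.I) = -1 := by
    rcases lt_or_gt_of_ne hd0 with h | h
    · have hzd : ζ * d = -Real.pi := by
        rw [hζdef, abs_of_neg h, div_mul_eq_mul_div, div_neg, mul_div_assoc,
          div_self hd0, mul_one]
      rw [hzd, neg_neg, Complex.exp_pi_mul_I]
    · have hzd : ζ * d = Real.pi := by
        rw [hζdef, abs_of_pos h, div_mul_cancel₀ _ hd0]
      rw [hzd, show ((↑(-Real.pi) : ℂ)) * Complex.I = -(↑Real.pi * Complex.I) by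
        push_cast; ring, Complex.exp_neg, Complex.exp_pi_mul_I]
      norm_num
  -- shift formula
  have hPshift : ∀ s : ℝ, P (s + ζ) = -(Complex.exp ((↑(-(ε * ζ)) : ℂ))) * P s := by
    intro s
    simp only [hP]
    have e1 : (↑(-((s+ζ)*d)) : ℂ) * Complex.I
        = ↑(-(s*d)) * Complex.I + ↑(-(ζ*d)) * Complex.I := by push_cast; ring
    have e2 : (↑(-(ε*(s+ζ))) : ℂ) = ↑(-(ε*s)) + ↑(-(ε*ζ)) := by push_cast; ring
    rw [e1, e2, Complex.exp_add, Complex.exp_add, hζd]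
    ring
  set e : ℂ := Complex.exp ((↑(-(ε * ζ)) : ℂ)) with he
  set G : ℝ → ℂ := fun s => P s * (e * g (s + ζ)) with hG
  have hFshift : ∀ s : ℝ, F (s + ζ) = -G s := by
    intro s
    simp only [hF, hG]
    rw [hPshift s]
    ring
  -- G integrable
  have hGnorm : ∀ s : ℝ, ‖G s‖ = Real.exp (-(ε*ζ)) * Real.exp (-(ε * s)) := by
    intro s
    simp only [hG]
    rw [norm_mul, hPnorm, norm_mul, hgnorm, mul_one, mul_comm]
    congr 1
    rw [he, Complex.norm_exp]
    simp
  have hGc : Continuous G := by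
    rw [hG]
    exact hPc.mul (continuous_const.mul (hgc.comp (continuous_id.add continuous_const)))
  have hGint : IntegrableOn G (Set.Ioi 0) := by
    apply Integrable.mono hexpint hGc.aestronglyMeasurable.restrict
    refine Filter.Eventually.of_forall fun s => ?_
    rw [hGnorm, Real.norm_eq_abs, Real.abs_exp]
    nlinarith [Real.exp_pos (-(ε*s)), Real.exp_le_one_iff.2 (by nlinarith : -(ε*ζ) ≤ 0),
      Real.exp_pos (-(ε*ζ))]
  -- split and shift
  have hIoc : IntegrableOn F (Set.Ioc 0 ζ) := hFint.mono_set Set.Ioc_subset_Ioi_self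
  have hIoi : IntegrableOn F (Set.Ioi ζ) := hFint.mono_set (Set.Ioi_subset_Ioi hζ.le)
  have hsplit : ∫ s in Set.Ioi (0:ℝ), F s
      = (∫ s in Set.Ioc (0:ℝ) ζ, F s) + ∫ s in Set.Ioi ζ, F s := by
    rw [← setIntegral_union Set.Ioc_disjoint_Ioi_same measurableSet_Ioi hIoc hIoi,
      Set.Ioc_union_Ioi_eq_Ioi hζ.le]
  have hshift : ∫ s in Set.Ioi ζ, F s = ∫ s in Set.Ioi (0:ℝ), F (s + ζ) := by
    rw [← (measurePreserving_add_right volume ζ).setIntegral_preimage_emb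
      (measurableEmbedding_addRight ζ) F (Set.Ioi ζ)]
    congr 1
    ext x
    simp
  have h2I : (∫ s in Set.Ioi (0:ℝ), F s) + (∫ s in Set.Ioi (0:ℝ), F s)
      = (∫ s in Set.Ioc (0:ℝ) ζ, F s) + ∫ s in Set.Ioi (0:ℝ), (F s - G s) := by
    have hng : ∫ s in Set.Ioi (0:ℝ), F (s + ζ) = - ∫ s in Set.Ioi (0:ℝ), G s := by
      rw [← integral_neg]
      exact integral_congr_ae (Filter.Eventually.of_forall fun s => hFshift s)
    rw [integral_sub hFint hGint]
    nth_rewrite 1 [hsplit]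
    rw [hshift, hng]
    ring
    -- bound on the Ioc piece
  have hI1 : ‖∫ s in Set.Ioc (0:ℝ) ζ, F s‖ ≤ ζ := by
    have h := norm_setIntegral_le_of_norm_le_const (μ := volume) (s := Set.Ioc (0:ℝ) ζ)
      (f := F) (C := 1) measure_Ioc_lt_top
      (fun x hx => by
        rw [hFnorm x]
        exact Real.exp_le_one_iff.2 (by nlinarith [hx.1]))
    simpa [Real.volume_real_Ioc_of_le hζ.le] using h
  -- bound on K differences
  have hKdiff : ∀ s : ℝ, |K (s + ζ) - K s| ≤ C₀ * ζ := by
    intro s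
    have heq : K (s + ζ) - K s = ∫ t in (τ + s)..(τ + (s + ζ)), κ t := by
      simp only [hK]
      rw [intervalIntegral.integral_interval_sub_left (hκint τ (τ + (s+ζ))) (hκint τ (τ+s))]
    rw [heq]
    have h := intervalIntegral.norm_integral_le_of_norm_le_const
      (a := τ + s) (b := τ + (s + ζ)) (C := C₀) (f := κ)
      (fun x _ => by simpa using hκb x)
    simpa [show τ + (s + ζ) - (τ + s) = ζ by ring, abs_of_nonneg hζ.le,
      Real.norm_eq_abs] using h
  -- pointwise bound on F - G
  have hpt : ∀ s : ℝ, ‖F s - G s‖ ≤ (lam * (C₀ * ζ) + ε * ζ) * Real.exp (-(ε * s)) := by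
    intro s
    have hfg : F s - G s = P s * (g s - e * g (s + ζ)) := by
      simp only [hF, hG]; ring
    rw [hfg, norm_mul, hPnorm, mul_comm]
    refine mul_le_mul_of_nonneg_right ?_ (Real.exp_pos _).le
    have h1 : ‖g s - g (s + ζ)‖ ≤ lam * (C₀ * ζ) :=
      calc ‖g s - g (s + ζ)‖ ≤ |(-(lam * K s)) - (-(lam * K (s + ζ)))| := by
            simp only [hg]; exact chord_aux _ _
        _ = lam * |K (s + ζ) - K s| := by
            rw [show (-(lam * K s)) - (-(lam * K (s + ζ)))
                  = lam * (K (s + ζ) - K s) by ring, abs_mul, abs_of_nonneg hlam]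
        _ ≤ lam * (C₀ * ζ) := mul_le_mul_of_nonneg_left (hKdiff s) hlam
    have h2 : ‖g (s + ζ) - e * g (s + ζ)‖ ≤ ε * ζ := by
      have hee : g (s + ζ) - e * g (s + ζ) = (1 - e) * g (s + ζ) := by ring
      rw [hee, norm_mul, hgnorm, mul_one, he]
      rw [show (1 : ℂ) - Complex.exp ((↑(-(ε * ζ)) : ℂ))
            = ((1 - Real.exp (-(ε * ζ)) : ℝ) : ℂ) by push_cast [Complex.ofReal_exp]; ring]
      have hxp : Real.exp (-(ε*ζ)) ≤ 1 := Real.exp_le_one_iff.2 (by nlinarith)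
      have h01 : (0:ℝ) ≤ 1 - Real.exp (-(ε*ζ)) := by linarith
      rw [Complex.norm_real, Real.norm_eq_abs, abs_of_nonneg h01]
      nlinarith [Real.add_one_le_exp (-(ε * ζ))]
    calc ‖g s - e * g (s + ζ)‖
        ≤ ‖g s - g (s+ζ)‖ + ‖g (s+ζ) - e * g (s+ζ)‖ :=
          norm_sub_le_norm_sub_add_norm_sub _ _ _
      _ ≤ lam * (C₀ * ζ) + ε * ζ := add_le_add h1 h2
  -- integral bound on F - G
  have hJ : ‖∫ s in Set.Ioi (0:ℝ), (F s - G s)‖ ≤ (lam * (C₀ * ζ) + ε * ζ) * (1/ε) := by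
    have hbint : Integrable (fun s : ℝ => (lam*(C₀*ζ)+ε*ζ) * Real.exp (-(ε*s)))
        (volume.restrict (Set.Ioi 0)) := hexpint.const_mul _
    calc ‖∫ s in Set.Ioi (0:ℝ), (F s - G s)‖
        ≤ ∫ s in Set.Ioi (0:ℝ), (lam*(C₀*ζ)+ε*ζ) * Real.exp (-(ε*s)) :=
          norm_integral_le_of_norm_le hbint (Filter.Eventually.of_forall fun s => hpt s)
      _ = (lam * (C₀ * ζ) + ε * ζ) * (1/ε) := by
          rw [integral_const_mul, hexpval]
  -- combine
  have h2 : 2 * ‖∫ s in Set.Ioi (0:ℝ), F s‖ ≤ ζ + (lam*(C₀*ζ)+ε*ζ) * (1/ε) := by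
    have hnorm2 : ‖(∫ s in Set.Ioi (0:ℝ), F s) + (∫ s in Set.Ioi (0:ℝ), F s)‖
        = 2 * ‖∫ s in Set.Ioi (0:ℝ), F s‖ := by
      rw [← two_smul ℂ, norm_smul]
      norm_num
    calc 2 * ‖∫ s in Set.Ioi (0:ℝ), F s‖
        = ‖(∫ s in Set.Ioi (0:ℝ), F s) + (∫ s in Set.Ioi (0:ℝ), F s)‖ := hnorm2.symm
      _ = ‖(∫ s in Set.Ioc (0:ℝ) ζ, F s) + ∫ s in Set.Ioi (0:ℝ), (F s - G s)‖ := by rw [h2I]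
      _ ≤ ‖∫ s in Set.Ioc (0:ℝ) ζ, F s‖ + ‖∫ s in Set.Ioi (0:ℝ), (F s - G s)‖ := norm_add_le _ _
      _ ≤ ζ + (lam*(C₀*ζ)+ε*ζ) * (1/ε) := add_le_add hI1 hJ
  simp only [hrepr]
  set I : ℂ := ∫ s in Set.Ioi (0:ℝ), F s with hIdef
  have hJ2 : (lam*(C₀*ζ)+ε*ζ) * (1/ε) ≤ C*(C₀*ζ) + ζ := by
    rw [mul_one_div, div_le_iff₀ hε]
    have h3 : lam * (C₀ * ζ) ≤ C * ε * (C₀ * ζ) :=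
      mul_le_mul_of_nonneg_right hlamC (by positivity)
    nlinarith
  have hIB : ‖I‖ ≤ ((C*C₀+2)*ζ)/2 := by nlinarith [h2, hJ2]
  have hζval : ζ * |d| = Real.pi := div_mul_cancel₀ _ habs.ne'
  have hpos : 0 < |d| + ε := by positivity
  rw [le_div_iff₀ hpos]
  have e1 : ‖I‖ * |d| ≤ ((C*C₀+2)*ζ)/2 * |d| := mul_le_mul_of_nonneg_right hIB (abs_nonneg _)
  have e2 : ‖I‖ * ε ≤ (1/ε) * ε := mul_le_mul_of_nonneg_right htriv hε.le
  have e3 : (1/ε) * ε = 1 := by field_simp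
  have e4 : C * C₀ * (ζ * |d|) = C * C₀ * Real.pi := by rw [hζval]
  have e5 : (0:ℝ) ≤ C * C₀ * Real.pi := by positivity
  nlinarith [Real.pi_pos]
end

section
/- Suppose the oscillatory decay |∫_{T³} du e^{-is E(u)}| ≤ C⟨s⟩^{-3/2} holds. Then for ν > 0, sup over α ∈ ℝ and over a ∈ [-6,6] of |∫_{T³} du' 1/(E(u') - a - α - iν)| is bounded by a constant C' independent of ν, α, a. -/
open MeasureTheory Set Filter

lemma re_aux (s : ℝ) (z : ℂ) : (-Complex.I * s * z).re = s * z.im := by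
  simp [Complex.mul_re]

lemma exp_int (w : ℂ) (hw : w.im < 0) :
    Integrable (fun s : ℝ => Complex.exp (-Complex.I * s * w)) (volume.restrict (Ioi 0)) := by
  have hmeas : AEStronglyMeasurable (fun s : ℝ => Complex.exp (-Complex.I * s * w))
      (volume.restrict (Ioi (0:ℝ))) := by
    apply Continuous.aestronglyMeasurable
    continuity
  refine Integrable.mono' (g := fun s => Real.exp (-(-w.im) * s))
    ?_ hmeas (Eventually.of_forall fun s => ?_)
  · exact exp_neg_integrableOn_Ioi 0 (by linarith)
  · rw [Complex.norm_exp, re_aux]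
    simp [mul_comm]

lemma resolvent_formula (w : ℂ) (hw : w.im < 0) :
    w⁻¹ = Complex.I * ∫ s in Ioi (0:ℝ), Complex.exp (-Complex.I * s * w) := by
  have hw0 : w ≠ 0 := fun h => by simp [h] at hw
  have hc : (-Complex.I * w) ≠ 0 := by
    simp [Complex.I_ne_zero, hw0]
  have key : ∫ s in Ioi (0:ℝ), Complex.exp (-Complex.I * s * w)
      = 0 - Complex.exp (-Complex.I * (0:ℝ) * w) / (-Complex.I * w) := by
    apply integral_Ioi_of_hasDerivAt_of_tendsto'
      (f := fun s : ℝ => Complex.exp (-Complex.I * s * w) / (-Complex.I * w))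
    · intro x _
      have h1 : HasDerivAt (fun s : ℝ => Complex.exp (-Complex.I * s * w))
          ((-Complex.I * w) * Complex.exp (-Complex.I * x * w)) x := by
        have h2 : HasDerivAt (fun s : ℝ => (-Complex.I * s * w)) (-Complex.I * w) x := by
          simpa using ((Complex.ofRealCLM.hasDerivAt (x := x)).const_mul (-Complex.I)).mul_const w
        simpa [mul_comm] using h2.cexp
      have := h1.div_const (-Complex.I * w)
      rwa [mul_div_cancel_left₀ _ hc] at this
    · exact exp_int w hw
    · rw [tendsto_zero_iff_norm_tendsto_zero]
      have : (fun x : ℝ => ‖Complex.exp (-Complex.I * x * w) / (-Complex.I * w)‖)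
          = fun x : ℝ => Real.exp (-(-w.im) * x) / ‖(-Complex.I * w)‖ := by
        funext x
        rw [norm_div, Complex.norm_exp, re_aux]
        ring_nf
      rw [this]
      have := Real.tendsto_exp_neg_atTop_nhds_zero
      have h3 : Tendsto (fun x : ℝ => Real.exp (-(-w.im) * x)) atTop (nhds 0) := by
        apply Real.tendsto_exp_atBot.comp
        exact Tendsto.const_mul_atTop_of_neg (by linarith) tendsto_id
      simpa using h3.div_const ‖(-Complex.I * w)‖
  rw [key, zero_sub]
  have h1 : Complex.exp (-Complex.I * (0:ℝ) * w) = 1 := by simp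
  rw [h1, eq_comm]
  field_simp

lemma majorant_integrable :
    IntegrableOn (fun s : ℝ => (1 + s ^ 2) ^ (-(3:ℝ) / 4)) (Ioi 0) := by
  have hcont : Continuous (fun s : ℝ => (1 + s ^ 2) ^ (-(3:ℝ) / 4)) := by
    apply Continuous.rpow_const (by continuity)
    intro x
    left
    positivity
  have h01 : IntegrableOn (fun s : ℝ => (1 + s ^ 2) ^ (-(3:ℝ) / 4)) (Ioc 0 1) :=
    (hcont.integrableOn_Icc (a := 0) (b := 1)).mono_set Ioc_subset_Icc_self
  have h1i : IntegrableOn (fun s : ℝ => (1 + s ^ 2) ^ (-(3:ℝ) / 4)) (Ioi 1) := by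
    refine Integrable.mono' (g := fun s : ℝ => s ^ (-(3:ℝ)/2))
      (integrableOn_Ioi_rpow_of_lt (by norm_num) one_pos)
      (hcont.aestronglyMeasurable.restrict)
      ?_
    filter_upwards [ae_restrict_mem measurableSet_Ioi] with x hx
    have hx1 : (1:ℝ) < x := hx
    have hx0 : (0:ℝ) < x := by linarith
    rw [Real.norm_eq_abs, abs_of_nonneg (by positivity)]
    have h2 : (x ^ 2 : ℝ) ^ (-(3:ℝ)/4) = x ^ (-(3:ℝ)/2) := by
      rw [← Real.rpow_natCast x 2, ← Real.rpow_mul hx0.le]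
      norm_num
    calc (1 + x ^ 2) ^ (-(3:ℝ) / 4) ≤ (x ^ 2 : ℝ) ^ (-(3:ℝ)/4) :=
          Real.rpow_le_rpow_of_nonpos (by positivity) (by linarith) (by norm_num)
      _ = x ^ (-(3:ℝ)/2) := h2
  have : IntegrableOn (fun s : ℝ => (1 + s ^ 2) ^ (-(3:ℝ) / 4)) (Ioc 0 1 ∪ Ioi 1) :=
    h01.union h1i
  rwa [Ioc_union_Ioi_eq_Ioi zero_le_one] at this

/-- If the free evolution on the torus decays, `|∫ e^{-isE(u)} du| ≤ C ⟨s⟩^{-3/2}`,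
then the resolvent integrals `∫ du' (E(u') - a - α - iν)⁻¹` are bounded by a
constant `C'` uniformly in `ν > 0`, `α ∈ ℝ`, and `a ∈ [-6, 6]`. -/
theorem resolvent_uniform_bound {X : Type*} [MeasurableSpace X]
    (μ : Measure X) [IsFiniteMeasure μ]
    (E : X → ℝ) (hE : Measurable E) (C : ℝ)
    (hdecay : ∀ s : ℝ,
      ‖∫ u, Complex.exp (-Complex.I * s * (E u)) ∂μ‖ ≤ C * (1 + s ^ 2) ^ (-(3 : ℝ) / 4)) :
    ∃ C' : ℝ, ∀ (ν α a : ℝ), 0 < ν → a ∈ Set.Icc (-6 : ℝ) 6 →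
      ‖∫ u, ((E u : ℂ) - a - α - Complex.I * ν)⁻¹ ∂μ‖ ≤ C' := by
  refine ⟨∫ s in Ioi (0:ℝ), C * (1 + s ^ 2) ^ (-(3:ℝ)/4), ?_⟩
  intro ν α a hν _ha
  set c : ℂ := (a:ℂ) + α + Complex.I * ν with hc
  have hwid : ∀ u, ((E u : ℂ) - a - α - Complex.I * ν) = (E u : ℂ) - c := by
    intro u; rw [hc]; ring
  have him : ∀ u, ((E u : ℂ) - c).im = -ν := by intro u; simp [hc]
  have step1 : ∀ u, ((E u : ℂ) - a - α - Complex.I * ν)⁻¹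
      = Complex.I * ∫ s in Ioi (0:ℝ), Complex.exp (-Complex.I * s * ((E u : ℂ) - c)) := by
    intro u
    rw [hwid u]
    exact resolvent_formula _ (by rw [him u]; linarith)
  rw [integral_congr_ae (Filter.Eventually.of_forall step1), integral_const_mul]
  have hFint : Integrable
      (Function.uncurry fun (u : X) (s : ℝ) =>
        Complex.exp (-Complex.I * s * ((E u : ℂ) - c)))
      (μ.prod (volume.restrict (Ioi 0))) := by
    have hm : Measurable fun p : X × ℝ =>
        Complex.exp (-Complex.I * p.2 * ((E p.1 : ℂ) - c)) := by
      apply Complex.measurable_exp.comp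
      exact (measurable_const.mul (Complex.measurable_ofReal.comp measurable_snd)).mul
        ((Complex.measurable_ofReal.comp (hE.comp measurable_fst)).sub measurable_const)
    refine Integrable.mono' (g := fun p : X × ℝ => (1:ℝ) * Real.exp (-ν * p.2))
      ((integrable_const (1:ℝ)).mul_prod (exp_neg_integrableOn_Ioi 0 hν))
      hm.aestronglyMeasurable (Filter.Eventually.of_forall fun p => ?_)
    obtain ⟨u, t⟩ := p
    simp only [Function.uncurry_apply_pair]
    rw [Complex.norm_exp, re_aux, him, one_mul]
    ring_nf
    exact le_refl _
  have swap := integral_integral_swap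
    (f := fun (u : X) (s : ℝ) => Complex.exp (-Complex.I * s * ((E u : ℂ) - c))) hFint
  rw [swap, norm_mul, Complex.norm_I, one_mul]
  apply norm_integral_le_of_norm_le (majorant_integrable.const_mul C)
  filter_upwards [ae_restrict_mem measurableSet_Ioi] with s hs
  have hsplit : ∀ u : X, Complex.exp (-Complex.I * s * ((E u : ℂ) - c))
      = Complex.exp (-Complex.I * s * (E u)) * Complex.exp (Complex.I * s * c) := by
    intro u
    rw [← Complex.exp_add]
    ring_nf
  rw [integral_congr_ae (Filter.Eventually.of_forall hsplit), integral_mul_const, norm_mul]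
  have hnormc : ‖Complex.exp (Complex.I * s * c)‖ ≤ 1 := by
    rw [Complex.norm_exp]
    have hre : (Complex.I * ↑s * c).re = -(s * ν) := by
      simp [hc, Complex.mul_re, Complex.mul_im]
    rw [hre]
    rw [Real.exp_le_one_iff]
    have hs0 : (0:ℝ) < s := hs
    nlinarith
  calc ‖∫ u, Complex.exp (-Complex.I * s * (E u)) ∂μ‖ * ‖Complex.exp (Complex.I * s * c)‖
      ≤ (C * (1 + s ^ 2) ^ (-(3:ℝ)/4)) * 1 := by
        have hC : 0 ≤ C := by
          have h := hdecay 0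
          have h1 : ((1:ℝ) + (0:ℝ) ^ 2) ^ (-(3:ℝ) / 4) = 1 := by norm_num
          rw [h1, mul_one] at h
          exact le_trans (norm_nonneg _) h
        apply mul_le_mul (by simpa [neg_div] using hdecay s) hnormc (norm_nonneg _)
        positivity
    _ = C * (1 + s ^ 2) ^ (-(3:ℝ)/4) := by ring
end

section
/- Under the same ⟨s⟩^{-3/2} decay hypothesis, for |γ| < ν one has |∫ du' 1/(E(u')-a-γ-iν) - ∫ du' 1/(E(u')-a-iν)| ≤ C ν^{1/2}, uniformly in a ∈ [-6,6]. -/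
set_option maxHeartbeats 1000000

open MeasureTheory

open Complex Set Filter in
private lemma aux_integrableOn_cexp (b : ℂ) (hb : 0 < b.re) :
    IntegrableOn (fun s : ℝ => Complex.exp (-(b * s))) (Set.Ioi 0) := by
  apply Integrable.mono' (exp_neg_integrableOn_Ioi 0 hb)
  · apply Continuous.aestronglyMeasurable
    fun_prop
  · filter_upwards with s
    rw [Complex.norm_exp]
    apply le_of_eq
    congr 1
    simp [Complex.mul_re]

open Complex Set Filter in
private lemma aux_integral_cexp (b : ℂ) (hb : 0 < b.re) :
    ∫ s : ℝ in Set.Ioi 0, Complex.exp (-(b * s)) = b⁻¹ := by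
  have hb0 : b ≠ 0 := fun h => by simp [h] at hb
  have D : ∀ s : ℝ, HasDerivAt (fun t : ℝ => -b⁻¹ * Complex.exp (-(b * t)))
      (Complex.exp (-(b * s))) s := by
    intro s
    have h0 : HasDerivAt (fun t : ℝ => b * (t : ℂ)) b s := by
      simpa using ((hasDerivAt_id ((s : ℝ) : ℂ)).const_mul b).comp_ofReal
    have h2 := (h0.neg.cexp).const_mul (-b⁻¹)
    convert h2 using 1
    · rfl
    · rfl
    · simp only [Pi.neg_apply]
      field_simp
  have tend : Tendsto (fun t : ℝ => -b⁻¹ * Complex.exp (-(b * t))) atTop (nhds 0) := by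
    rw [tendsto_zero_iff_norm_tendsto_zero]
    have heq : (fun t : ℝ => ‖-b⁻¹ * Complex.exp (-(b * t))‖)
        = fun t : ℝ => ‖b⁻¹‖ * Real.exp (-(b.re * t)) := by
      funext t
      rw [norm_mul, norm_neg, Complex.norm_exp]
      congr 2
      simp [Complex.mul_re]
    rw [heq]
    have h3 : Tendsto (fun t : ℝ => b.re * t) atTop atTop :=
      Tendsto.const_mul_atTop hb tendsto_id
    have h4 : Tendsto (fun t : ℝ => Real.exp (-(b.re * t))) atTop (nhds 0) :=
      Real.tendsto_exp_neg_atTop_nhds_zero.comp h3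
    simpa using h4.const_mul ‖b⁻¹‖
  have := integral_Ioi_of_hasDerivAt_of_tendsto (a := (0 : ℝ))
    (by fun_prop : Continuous (fun t : ℝ => -b⁻¹ * Complex.exp (-(b * t)))).continuousWithinAt
    (fun s _ => D s) (aux_integrableOn_cexp b hb) tend
  simpa using this

/-- Under the same `⟨s⟩^{-3/2}` decay hypothesis on the free evolution,
shifting the spectral parameter by `γ` with `|γ| < ν` changes the resolvent
integral by at most `C ν^{1/2}`, uniformly in `a ∈ [-6, 6]`. -/
theorem resolvent_shift_bound {X : Type*} [MeasurableSpace X]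
    (μ : Measure X) [IsFiniteMeasure μ]
    (E : X → ℝ) (hE : Measurable E) (C : ℝ)
    (hdecay : ∀ s : ℝ,
      ‖∫ u, Complex.exp (-Complex.I * s * (E u)) ∂μ‖ ≤ C * (1 + s ^ 2) ^ (-(3 : ℝ) / 4)) :
    ∃ C' : ℝ, ∀ (ν γ a : ℝ), 0 < ν → |γ| < ν → a ∈ Set.Icc (-6 : ℝ) 6 →
      ‖(∫ u, ((E u : ℂ) - a - γ - Complex.I * ν)⁻¹ ∂μ)
          - ∫ u, ((E u : ℂ) - a - Complex.I * ν)⁻¹ ∂μ‖ ≤ C' * Real.sqrt ν := by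
  have hC : 0 ≤ C := by
    have h := (norm_nonneg _).trans (hdecay 0)
    simpa using h
  refine ⟨2 * C * Real.sqrt Real.pi, fun ν γ a hν hγ _ => ?_⟩
  set F : ℝ → ℂ := fun s => ∫ u, Complex.exp (-Complex.I * s * (E u)) ∂μ with hF
  -- key representation lemma
  have key : ∀ θ : ℝ,
      ((∫ u, ((E u : ℂ) - θ - Complex.I * ν)⁻¹ ∂μ)
        = Complex.I * ∫ s in Set.Ioi (0 : ℝ),
            F s * Complex.exp ((Complex.I * θ - ν) * s))
      ∧ IntegrableOn (fun s : ℝ => F s * Complex.exp ((Complex.I * θ - ν) * s))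
          (Set.Ioi (0 : ℝ)) := by
    intro θ
    set g : X → ℝ → ℂ :=
      fun u s => Complex.exp (-((Complex.I * ((E u : ℂ) - θ - Complex.I * ν)) * s)) with hg
    have hgnorm : ∀ u s, ‖g u s‖ = Real.exp (-ν * s) := by
      intro u s
      rw [hg, Complex.norm_exp]
      congr 1
      simp [Complex.mul_re, Complex.mul_im]
    have hgint : Integrable (Function.uncurry g)
        (μ.prod (volume.restrict (Set.Ioi (0 : ℝ)))) := by
      have hmaj : Integrable (fun p : X × ℝ => (1 : ℝ) * Real.exp (-ν * p.2))
          (μ.prod (volume.restrict (Set.Ioi (0 : ℝ)))) :=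
        (integrable_const (1 : ℝ)).mul_prod (exp_neg_integrableOn_Ioi 0 hν)
      apply Integrable.mono' hmaj
      · apply Measurable.aestronglyMeasurable
        apply Complex.measurable_exp.comp
        fun_prop
      · filter_upwards with p
        have : ‖Function.uncurry g p‖ = Real.exp (-ν * p.2) := hgnorm p.1 p.2
        rw [this]
        simp
    have hinner : ∀ s : ℝ, (∫ u, g u s ∂μ)
        = F s * Complex.exp ((Complex.I * θ - ν) * s) := by
      intro s
      have heq : ∀ u, g u s = Complex.exp (-Complex.I * s * (E u))
          * Complex.exp ((Complex.I * θ - ν) * s) := by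
        intro u
        have harg : -((Complex.I * ((E u : ℂ) - θ - Complex.I * ν)) * s)
            = (-Complex.I * s * (E u)) + (Complex.I * θ - ν) * s := by
          push_cast
          ring_nf
          rw [Complex.I_sq]
          ring
        simp only [hg]
        rw [harg, Complex.exp_add]
      simp_rw [heq]
      exact integral_mul_const _ _
    constructor
    · -- the representation
      have hpt : ∀ u, ((E u : ℂ) - θ - Complex.I * ν)⁻¹
          = Complex.I * ∫ s in Set.Ioi (0 : ℝ), g u s := by
        intro u
        set z : ℂ := (E u : ℂ) - θ - Complex.I * ν with hz
        have hre : 0 < (Complex.I * z).re := by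
          simp [hz, Complex.mul_re, Complex.sub_im]
          exact hν
        simp only [hg]
        rw [aux_integral_cexp (Complex.I * z) hre]
        rw [mul_inv, ← mul_assoc, mul_inv_cancel₀ Complex.I_ne_zero, one_mul]
      have step1 : (∫ u, ((E u : ℂ) - θ - Complex.I * ν)⁻¹ ∂μ)
          = ∫ u, Complex.I * (∫ s in Set.Ioi (0 : ℝ), g u s) ∂μ :=
        integral_congr_ae (Filter.Eventually.of_forall hpt)
      rw [step1, integral_const_mul, integral_integral_swap hgint]
      congr 1
      exact integral_congr_ae (Filter.Eventually.of_forall hinner)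
    · -- integrability
      have h1 : Integrable (fun s : ℝ => ∫ u, Function.uncurry g (u, s) ∂μ)
          (volume.restrict (Set.Ioi (0 : ℝ))) := hgint.integral_prod_right
      exact h1.congr (Filter.Eventually.of_forall fun s => hinner s)
  obtain ⟨e1, i1⟩ := key (a + γ)
  obtain ⟨e2, i2⟩ := key a
  have ecast : (∫ u, ((E u : ℂ) - a - γ - Complex.I * ν)⁻¹ ∂μ)
      = ∫ u, ((E u : ℂ) - ↑(a + γ) - Complex.I * ν)⁻¹ ∂μ := by
    refine integral_congr_ae (Filter.Eventually.of_forall fun u => ?_)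
    push_cast
    ring_nf
  rw [ecast, e1, e2, ← mul_sub, ← integral_sub i1 i2, norm_mul, Complex.norm_I, one_mul]
  -- the majorant
  have hmaj : IntegrableOn
      (fun s : ℝ => 2 * C * ν * (s ^ (-(1 : ℝ) / 2) * Real.exp (-ν * s)))
      (Set.Ioi (0 : ℝ)) := by
    have h := integrableOn_rpow_mul_exp_neg_mul_rpow
      (p := 1) (s := -(1 : ℝ) / 2) (b := ν) (by norm_num) (by norm_num) hν
    simp only [Real.rpow_one] at h
    exact h.const_mul _
  have hbound : ∀ s ∈ Set.Ioi (0 : ℝ),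
      ‖F s * Complex.exp ((Complex.I * ↑(a + γ) - ν) * s)
        - F s * Complex.exp ((Complex.I * a - ν) * s)‖
      ≤ 2 * C * ν * (s ^ (-(1 : ℝ) / 2) * Real.exp (-ν * s)) := by
    intro s hs
    rw [Set.mem_Ioi] at hs
    have hdiff : F s * Complex.exp ((Complex.I * ↑(a + γ) - ν) * s)
        - F s * Complex.exp ((Complex.I * a - ν) * s)
        = F s * Complex.exp ((Complex.I * a - ν) * s)
            * (Complex.exp (Complex.I * γ * s) - 1) := by
      have h5 : Complex.exp ((Complex.I * ↑(a + γ) - ν) * s)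
          = Complex.exp ((Complex.I * a - ν) * s) * Complex.exp (Complex.I * γ * s) := by
        rw [← Complex.exp_add]
        congr 1
        push_cast
        ring
      rw [h5]
      ring
    -- norm of the oscillatory-decaying factor
    have hX : ‖Complex.exp ((Complex.I * a - ν) * s)‖ = Real.exp (-ν * s) := by
      rw [Complex.norm_exp]
      congr 1
      simp [Complex.mul_re, Complex.sub_re, Complex.sub_im]
    -- bound on ‖exp(iγs) - 1‖
    have hY : ‖Complex.exp (Complex.I * γ * s) - 1‖ ≤ 2 * (ν * s) := by
      have habs : ‖Complex.I * γ * s‖ = |γ| * s := by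
        rw [norm_mul, norm_mul]
        simp [abs_of_pos hs]
      have hγs : |γ| * s ≤ ν * s := by
        have := hγ.le
        nlinarith
      by_cases hcase : |γ| * s ≤ 1
      · have h6 := Complex.norm_exp_sub_one_le (x := Complex.I * γ * s)
          (by rw [habs]; exact hcase)
        calc ‖Complex.exp (Complex.I * γ * s) - 1‖
            ≤ 2 * ‖Complex.I * γ * s‖ := h6
          _ = 2 * (|γ| * s) := by rw [habs]
          _ ≤ 2 * (ν * s) := by linarith
      · push_neg at hcase
        have hexp1 : ‖Complex.exp (Complex.I * γ * s)‖ = 1 := by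
          rw [Complex.norm_exp]
          have : ((Complex.I * γ * s).re) = 0 := by
            simp [Complex.mul_re, Complex.mul_im]
          rw [this, Real.exp_zero]
        calc ‖Complex.exp (Complex.I * γ * s) - 1‖
            ≤ ‖Complex.exp (Complex.I * γ * s)‖ + ‖(1 : ℂ)‖ := norm_sub_le _ _
          _ = 2 := by rw [hexp1]; norm_num
          _ ≤ 2 * (|γ| * s) := by nlinarith
          _ ≤ 2 * (ν * s) := by linarith
    -- bound on ‖F s‖
    have hFs : ‖F s‖ ≤ C * s ^ (-(3 : ℝ) / 2) := by
      refine (hdecay s).trans ?_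
      refine mul_le_mul_of_nonneg_left ?_ hC
      have h7 : (1 + s ^ 2) ^ (-(3 : ℝ) / 4) ≤ (s ^ 2) ^ (-(3 : ℝ) / 4) :=
        Real.rpow_le_rpow_of_nonpos (by positivity) (by linarith) (by norm_num)
      refine h7.trans_eq ?_
      rw [← Real.rpow_natCast s 2, ← Real.rpow_mul hs.le]
      norm_num
    have hrw : s ^ (-(3 : ℝ) / 2) * s = s ^ (-(1 : ℝ) / 2) := by
      nth_rewrite 2 [← Real.rpow_one s]
      rw [← Real.rpow_add hs]
      norm_num
    rw [hdiff, norm_mul, norm_mul, hX]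
    calc ‖F s‖ * Real.exp (-ν * s) * ‖Complex.exp (Complex.I * γ * s) - 1‖
        ≤ (C * s ^ (-(3 : ℝ) / 2)) * Real.exp (-ν * s) * (2 * (ν * s)) := by
          have step := mul_le_mul_of_nonneg_left hY
            (by positivity : (0:ℝ) ≤ ‖F s‖ * Real.exp (-ν * s))
          refine (mul_le_mul_of_nonneg_left hY
            (by positivity : (0:ℝ) ≤ ‖F s‖ * Real.exp (-ν * s))).trans ?_
          exact mul_le_mul_of_nonneg_right
            (mul_le_mul_of_nonneg_right hFs (Real.exp_nonneg _)) (by positivity)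
      _ = 2 * C * ν * (s ^ (-(1 : ℝ) / 2) * Real.exp (-ν * s)) := by
          rw [← hrw]
          try ring
  -- conclude
  refine le_trans (norm_integral_le_of_norm_le hmaj
    ((ae_restrict_iff' measurableSet_Ioi).mpr (Filter.Eventually.of_forall hbound))) ?_
  have hG := Real.integral_rpow_mul_exp_neg_mul_Ioi (a := (1:ℝ)/2) (r := ν) (by norm_num) hν
  have hGam : (∫ s in Set.Ioi (0:ℝ), s ^ (-(1:ℝ)/2) * Real.exp (-ν * s))
      = (1/ν) ^ ((1:ℝ)/2) * Real.Gamma ((1:ℝ)/2) := by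
    rw [← hG]
    refine setIntegral_congr_fun measurableSet_Ioi (fun s hs => ?_)
    norm_num
  rw [integral_const_mul, hGam, Real.Gamma_one_half_eq]
  have hiv : (1/ν : ℝ) ^ ((1:ℝ)/2) = (Real.sqrt ν)⁻¹ := by
    rw [← Real.sqrt_eq_rpow, one_div, Real.sqrt_inv]
  rw [hiv]
  have hsq : Real.sqrt ν * Real.sqrt ν = ν := Real.mul_self_sqrt hν.le
  have hpos : 0 < Real.sqrt ν := Real.sqrt_pos.mpr hν
  apply le_of_eq
  have hkey2 : ν * (Real.sqrt ν)⁻¹ = Real.sqrt ν := by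
    field_simp
    rw [sq, hsq]
  linear_combination (2 * C * Real.sqrt Real.pi) * hkey2
end

section
/- For any ν > 0 and any real E with |E| > 1/τ, setting ζ = π/|E|, one has |∫₀^τ ds (s^m/m!) e^{-isE} g(s)| ≤ C^m ζ (2τ)^m/m! whenever g : ℝ₊ → ℂ satisfies |g(s)| ≤ 1 and |g(s+ζ) - g(s)| ≤ Cλζ with λτ ≤ C'. Consequently |∫₀^τ ds (s^m/m!) e^{-isE} g(s)| ≤ C'' (1/(|E| + τ^{-1})) (C''τ)^m/m!. -/
set_option maxHeartbeats 1000000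

open MeasureTheory Real

lemma pow_sub_pow_le_aux {a b : ℝ} (hb : 0 ≤ b) (hab : b ≤ a) :
    ∀ m : ℕ, a ^ m - b ^ m ≤ m * (a - b) * a ^ (m - 1) := by
  intro m
  induction m with
  | zero => simp
  | succ n ih =>
    have ha : 0 ≤ a := hb.trans hab
    have h1 : a ^ (n + 1) - b ^ (n + 1) = a * (a ^ n - b ^ n) + (a - b) * b ^ n := by ring
    have h2 : a * (a ^ n - b ^ n) ≤ a * (n * (a - b) * a ^ (n - 1)) :=
      mul_le_mul_of_nonneg_left ih ha
    have h3 : (a - b) * b ^ n ≤ (a - b) * a ^ n :=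
      mul_le_mul_of_nonneg_left (pow_le_pow_left₀ hb hab n) (by linarith)
    have h4 : a * (↑n * (a - b) * a ^ (n - 1)) ≤ ↑n * (a - b) * a ^ n := by
      cases n with
      | zero => simp
      | succ k =>
        have hh : a * a ^ (k + 1 - 1) = a ^ (k + 1) := by
          simp [pow_succ]; ring
        refine le_of_eq ?_
        rw [← hh]; ring
    push_cast
    calc a ^ (n + 1) - b ^ (n + 1) ≤ ↑n * (a - b) * a ^ n + (a - b) * a ^ n := by
          rw [h1]; exact add_le_add (h2.trans h4) h3
      _ = (↑n + 1) * (a - b) * a ^ (n + 1 - 1) := by simp; ring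

lemma intervalIntegrable_of_bound {f : ℝ → ℂ} (hf : Measurable f) (a b M : ℝ)
    (hM : ∀ s ∈ Set.uIoc a b, ‖f s‖ ≤ M) : IntervalIntegrable f volume a b := by
  refine (intervalIntegrable_const (c := M)).mono_fun'
    (hf.aestronglyMeasurable) ?_
  filter_upwards [ae_restrict_mem measurableSet_uIoc] with s hs
  exact hM s hs

lemma exp_shift_aux (E : ℝ) (hE : 0 < |E|) (s : ℝ) :
    Complex.exp (-Complex.I * ↑(s + π / |E|) * E) = - Complex.exp (-Complex.I * s * E) := by
  have hE0 : E ≠ 0 := by intro h; simp [h] at hE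
  have h1 : (-Complex.I * ↑(s + π / |E|) * E)
      = -Complex.I * s * E + (-Complex.I * ((π / |E|) * E)) := by push_cast; ring
  rw [h1, Complex.exp_add]
  have hkey : Complex.exp (-Complex.I * (((π / |E| * E : ℝ)) : ℂ)) = -1 := by
    rcases abs_cases E with ⟨h, _⟩ | ⟨h, _⟩
    · have h3 : (π / |E| * E : ℝ) = π := by rw [h]; field_simp
      rw [h3]
      have h4 : (-Complex.I * ((π:ℝ) : ℂ) : ℂ) = -(π * Complex.I) := by ring
      rw [h4, Complex.exp_neg, Complex.exp_pi_mul_I]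
      norm_num
    · have h3 : (π / |E| * E : ℝ) = -π := by
        rw [h, div_neg, neg_mul, div_mul_cancel₀ _ hE0]
      rw [h3]
      have h4 : (-Complex.I * ((-π:ℝ) : ℂ) : ℂ) = π * Complex.I := by push_cast; ring
      rw [h4, Complex.exp_pi_mul_I]
  rw [show (-Complex.I * (↑π / ↑|E| * ↑E) : ℂ)
      = -Complex.I * (((π / |E| * E : ℝ)) : ℂ) by push_cast; ring, hkey]
  ring

lemma exp_norm_aux (E s : ℝ) : ‖Complex.exp (-Complex.I * s * E)‖ = 1 := by
  rw [Complex.norm_exp]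
  simp [Complex.mul_re]

/-- Oscillatory estimate for nested-diagram amplitudes: for `|E| > 1/τ`,
setting `ζ = π/|E|`, if `|g| ≤ 1`, `|g(s+ζ) - g(s)| ≤ C λ ζ` and `λτ ≤ C'`,
then `|∫₀^τ (s^m/m!) e^{-isE} g(s) ds| ≤ K^{m+1} ζ (2τ)^m / m!`, and consequently
`|∫₀^τ (s^m/m!) e^{-isE} g(s) ds| ≤ K^{m+1} (|E| + τ⁻¹)⁻¹ (Kτ)^m / m!`. -/
theorem nested_oscillatory_bound (C Cconst : ℝ) (hC : 0 ≤ C) (hCconst : 0 ≤ Cconst) :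
    ∃ K : ℝ, 0 < K ∧
      ∀ (m : ℕ) (τ E lam : ℝ) (g : ℝ → ℂ),
        0 < τ → 1 / τ < |E| → 0 ≤ lam → lam * τ ≤ Cconst →
        Measurable g → (∀ s, ‖g s‖ ≤ 1) →
        (∀ s, 0 ≤ s → ‖g (s + Real.pi / |E|) - g s‖ ≤ C * lam * (Real.pi / |E|)) →
        ‖∫ s in (0 : ℝ)..τ, ((s : ℂ) ^ m / (m.factorial : ℂ))
              * Complex.exp (-Complex.I * s * E) * g s‖
            ≤ K ^ (m + 1) * (Real.pi / |E|) * (2 * τ) ^ m / m.factorial ∧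
        ‖∫ s in (0 : ℝ)..τ, ((s : ℂ) ^ m / (m.factorial : ℂ))
              * Complex.exp (-Complex.I * s * E) * g s‖
            ≤ K ^ (m + 1) * (1 / (|E| + τ⁻¹)) * (K * τ) ^ m / m.factorial := by
  have hπ : (0:ℝ) < π := Real.pi_pos
  have hπ4 : π ≤ 4 := Real.pi_le_four
  set K : ℝ := π * (C * Cconst + 3) + 9 with hKdef
  have hK9 : (9:ℝ) ≤ K := by nlinarith [mul_nonneg hC hCconst]
  have hK : 0 < K := by linarith
  set c : ℝ := (C * Cconst + 3) / 2 with hcdef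
  have hc : 0 < c := by rw [hcdef]; nlinarith [mul_nonneg hC hCconst]
  have hcK : c ≤ K := by
    rw [hcdef, hKdef]; nlinarith [mul_nonneg hC hCconst, Real.pi_gt_three]
  have h2πc : 2 * π * c ≤ K := by rw [hcdef, hKdef]; ring_nf; nlinarith
  refine ⟨K, hK, ?_⟩
  intro m τ E lam g hτ hE hlam hlamτ hgm hg1 hginc
  have hEpos : 0 < |E| := lt_trans (by positivity) hE
  set ζ : ℝ := π / |E| with hζdef
  have hζ : 0 < ζ := by positivity
  have h1E : 1 < |E| * τ := by
    rw [div_lt_iff₀ hτ] at hE; linarith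
  have hζπτ : ζ ≤ π * τ := by
    rw [hζdef, div_le_iff₀ hEpos]
    nlinarith
  have hF : (0:ℝ) < m.factorial := by exact_mod_cast m.factorial_pos
  set f : ℝ → ℂ := fun s => ((s : ℂ) ^ m / (m.factorial : ℂ))
      * Complex.exp (-Complex.I * s * E) * g s with hfdef
  have hfmeas : Measurable f := by
    apply Measurable.mul _ hgm
    apply Measurable.mul
    · exact (Complex.measurable_ofReal.pow_const m).div_const _
    · exact Complex.measurable_exp.comp
        ((Complex.measurable_ofReal.const_mul _).mul_const _)
  have hfnorm : ∀ s : ℝ, 0 ≤ s → ‖f s‖ ≤ s ^ m / m.factorial := by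
    intro s hs
    rw [hfdef]
    simp only [norm_mul]
    rw [exp_norm_aux]
    have h1 : ((s:ℂ) ^ m / (m.factorial : ℂ)) = (((s ^ m / m.factorial : ℝ)) : ℂ) := by
      push_cast; ring
    rw [h1, Complex.norm_real, Real.norm_eq_abs, abs_of_nonneg (by positivity)]
    calc s ^ m / m.factorial * 1 * ‖g s‖ ≤ s ^ m / m.factorial * 1 * 1 := by
          apply mul_le_mul_of_nonneg_left (hg1 s) (by positivity)
      _ = s ^ m / m.factorial := by ring
  have hint : ∀ a b : ℝ, 0 ≤ a → 0 ≤ b → IntervalIntegrable f volume a b := by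
    intro a b ha hb
    apply intervalIntegrable_of_bound hfmeas a b ((max a b) ^ m / m.factorial)
    intro s hs
    have hs0 : 0 ≤ s := le_of_lt (lt_of_le_of_lt (le_min ha hb) hs.1)
    refine (hfnorm s hs0).trans ?_
    gcongr
    exact hs.2
  have hintsh : IntervalIntegrable (fun s => f (s + ζ)) volume 0 τ := by
    have hm2 : Measurable fun s : ℝ => f (s + ζ) := hfmeas.comp (measurable_add_const ζ)
    apply intervalIntegrable_of_bound hm2 0 τ ((τ + ζ) ^ m / m.factorial)
    intro s hs
    rw [Set.uIoc_of_le hτ.le] at hs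
    have h0 : (0:ℝ) ≤ s + ζ := by linarith [hs.1.le]
    refine (hfnorm _ h0).trans ?_
    gcongr
    all_goals first | exact h0 | exact hs.2 | linarith [hs.2]
  have hshift : (∫ s in (0:ℝ)..τ, f (s + ζ)) = ∫ s in ζ..(τ + ζ), f s := by
    have := intervalIntegral.integral_comp_add_right (a := (0:ℝ)) (b := τ) (f := f) ζ
    simpa using this
  have hsplit1 : (∫ s in (0:ℝ)..ζ, f s) + (∫ s in ζ..τ, f s) = ∫ s in (0:ℝ)..τ, f s :=
    intervalIntegral.integral_add_adjacent_intervals (hint 0 ζ le_rfl hζ.le)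
      (hint ζ τ hζ.le hτ.le)
  have hsplit2 : (∫ s in ζ..τ, f s) + (∫ s in τ..(τ + ζ), f s) = ∫ s in ζ..(τ + ζ), f s :=
    intervalIntegral.integral_add_adjacent_intervals (hint ζ τ hζ.le hτ.le)
      (hint τ (τ + ζ) hτ.le (by linarith))
  have hadd : (∫ s in (0:ℝ)..τ, (f s + f (s + ζ)))
      = (∫ s in (0:ℝ)..τ, f s) + ∫ s in (0:ℝ)..τ, f (s + ζ) :=
    intervalIntegral.integral_add (hint 0 τ le_rfl hτ.le) hintsh
  have hiden : 2 * (∫ s in (0:ℝ)..τ, f s)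
      = (∫ s in (0:ℝ)..τ, (f s + f (s + ζ))) + (∫ s in (0:ℝ)..ζ, f s)
        - ∫ s in τ..(τ + ζ), f s := by
    rw [hadd, hshift, ← hsplit2, ← hsplit1]; ring
  -- pointwise bound on the sum
  set M1 : ℝ := C * lam * ζ * (τ ^ m / m.factorial)
      + m * ζ * ((1 + π) * τ) ^ (m - 1) / m.factorial with hM1def
  have hptw : ∀ s ∈ Set.uIoc (0:ℝ) τ, ‖f s + f (s + ζ)‖ ≤ M1 := by
    intro s hs
    rw [Set.uIoc_of_le hτ.le] at hs
    have hs0 : 0 ≤ s := hs.1.le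
    have hsum_eq : f s + f (s + ζ) = Complex.exp (-Complex.I * s * E) *
        (((s : ℂ) ^ m / (m.factorial : ℂ)) * (g s - g (s + ζ))
          - ((((s + ζ : ℝ) : ℂ)) ^ m - (s : ℂ) ^ m) / (m.factorial : ℂ) * g (s + ζ)) := by
      rw [hfdef]
      simp only
      rw [hζdef, exp_shift_aux E hEpos s]
      push_cast
      ring
    rw [hsum_eq, norm_mul, exp_norm_aux, one_mul]
    have hn1 : ‖(s:ℂ) ^ m / (m.factorial : ℂ)‖ = s ^ m / m.factorial := by
      rw [show ((s:ℂ) ^ m / (m.factorial : ℂ)) = (((s ^ m / m.factorial : ℝ)) : ℂ) by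
        push_cast; ring, Complex.norm_real, Real.norm_eq_abs, abs_of_nonneg (by positivity)]
    have hmono : s ^ m ≤ (s + ζ) ^ m := pow_le_pow_left₀ hs0 (by linarith) m
    have hn2 : ‖((((s + ζ : ℝ) : ℂ)) ^ m - (s : ℂ) ^ m) / (m.factorial : ℂ)‖
        = ((s + ζ) ^ m - s ^ m) / m.factorial := by
      rw [show (((((s + ζ : ℝ) : ℂ)) ^ m - (s : ℂ) ^ m) / (m.factorial : ℂ))
          = ((((s + ζ) ^ m - s ^ m) / m.factorial : ℝ) : ℂ) by push_cast; ring,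
        Complex.norm_real, Real.norm_eq_abs, abs_of_nonneg]
      exact div_nonneg (by linarith) hF.le
    have hbd : ‖((s : ℂ) ^ m / (m.factorial : ℂ)) * (g s - g (s + ζ))
          - ((((s + ζ : ℝ) : ℂ)) ^ m - (s : ℂ) ^ m) / (m.factorial : ℂ) * g (s + ζ)‖
        ≤ s ^ m / m.factorial * (C * lam * ζ) + ((s + ζ) ^ m - s ^ m) / m.factorial * 1 := by
      refine (norm_sub_le _ _).trans ?_
      rw [norm_mul, norm_mul, hn1, hn2]
      have hg2 : ‖g s - g (s + ζ)‖ ≤ C * lam * ζ := by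
        rw [norm_sub_rev]; exact hginc s hs0
      gcongr
      all_goals first
        | exact norm_nonneg _
        | exact div_nonneg (by linarith) hF.le
        | exact hg2
        | exact hg1 _
        | positivity
    refine hbd.trans ?_
    rw [hM1def]
    have ht1 : s ^ m / m.factorial * (C * lam * ζ) ≤ C * lam * ζ * (τ ^ m / m.factorial) := by
      have : s ^ m ≤ τ ^ m := pow_le_pow_left₀ hs0 hs.2 m
      have h0 : 0 ≤ C * lam * ζ := by positivity
      calc s ^ m / m.factorial * (C * lam * ζ) ≤ τ ^ m / m.factorial * (C * lam * ζ) := by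
            gcongr
        _ = C * lam * ζ * (τ ^ m / m.factorial) := by ring
    have ht2 : ((s + ζ) ^ m - s ^ m) / m.factorial
        ≤ m * ζ * ((1 + π) * τ) ^ (m - 1) / m.factorial := by
      gcongr
      have h1 := pow_sub_pow_le_aux hs0 (show s ≤ s + ζ by linarith) m
      refine h1.trans ?_
      have h2 : (s + ζ) ^ (m - 1) ≤ ((1 + π) * τ) ^ (m - 1) := by
        apply pow_le_pow_left₀ (by linarith)
        linarith [hs.2, hζπτ]
      calc (m:ℝ) * (s + ζ - s) * (s + ζ) ^ (m - 1)
          = m * ζ * (s + ζ) ^ (m - 1) := by ring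
        _ ≤ m * ζ * ((1 + π) * τ) ^ (m - 1) := by
            apply mul_le_mul_of_nonneg_left h2 (by positivity)
    linarith
  have hA : ‖∫ s in (0:ℝ)..τ, (f s + f (s + ζ))‖ ≤ M1 * τ := by
    have := intervalIntegral.norm_integral_le_of_norm_le_const hptw
    simpa [abs_of_nonneg hτ.le] using this
  have hBptw : ∀ s ∈ Set.uIoc (0:ℝ) ζ, ‖f s‖ ≤ ζ ^ m / m.factorial := by
    intro s hs
    rw [Set.uIoc_of_le hζ.le] at hs
    refine (hfnorm s hs.1.le).trans ?_
    gcongr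
    exacts [hs.1.le, hs.2]
  have hB : ‖∫ s in (0:ℝ)..ζ, f s‖ ≤ ζ ^ m / m.factorial * ζ := by
    have := intervalIntegral.norm_integral_le_of_norm_le_const hBptw
    simpa [abs_of_nonneg hζ.le] using this
  have hCptw : ∀ s ∈ Set.uIoc τ (τ + ζ), ‖f s‖ ≤ ((1 + π) * τ) ^ m / m.factorial := by
    intro s hs
    rw [Set.uIoc_of_le (by linarith)] at hs
    refine (hfnorm s (by linarith [hs.1])).trans ?_
    gcongr
    · linarith [hs.1]
    · linarith [hs.2, hζπτ]
  have hCb : ‖∫ s in τ..(τ + ζ), f s‖ ≤ ((1 + π) * τ) ^ m / m.factorial * ζ := by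
    have := intervalIntegral.norm_integral_le_of_norm_le_const hCptw
    simpa [abs_of_nonneg hζ.le] using this
  -- combine
  have h2I : 2 * ‖∫ s in (0:ℝ)..τ, f s‖
      ≤ M1 * τ + ζ ^ m / m.factorial * ζ + ((1 + π) * τ) ^ m / m.factorial * ζ := by
    have hn : ‖(2:ℂ) * ∫ s in (0:ℝ)..τ, f s‖ = 2 * ‖∫ s in (0:ℝ)..τ, f s‖ := by
      rw [norm_mul]; norm_num
    calc 2 * ‖∫ s in (0:ℝ)..τ, f s‖
        = ‖(∫ s in (0:ℝ)..τ, (f s + f (s + ζ))) + (∫ s in (0:ℝ)..ζ, f s)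
            - ∫ s in τ..(τ + ζ), f s‖ := by rw [← hn, hiden]
      _ ≤ ‖(∫ s in (0:ℝ)..τ, (f s + f (s + ζ))) + (∫ s in (0:ℝ)..ζ, f s)‖
            + ‖∫ s in τ..(τ + ζ), f s‖ := norm_sub_le _ _
      _ ≤ (‖∫ s in (0:ℝ)..τ, (f s + f (s + ζ))‖ + ‖∫ s in (0:ℝ)..ζ, f s‖)
            + ‖∫ s in τ..(τ + ζ), f s‖ := add_le_add (norm_add_le _ _) le_rfl
      _ ≤ M1 * τ + ζ ^ m / m.factorial * ζ + ((1 + π) * τ) ^ m / m.factorial * ζ :=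
          add_le_add (add_le_add hA hB) hCb
  -- master bound
  have hmaster : ‖∫ s in (0:ℝ)..τ, f s‖
      ≤ c * (2 * (1 + π)) ^ m * (ζ * τ ^ m / m.factorial) := by
    have hP : τ ^ m ≤ ((1 + π) * τ) ^ m := by
      apply pow_le_pow_left₀ hτ.le
      nlinarith [mul_pos hπ hτ]
    have hPnn : (0:ℝ) ≤ ((1 + π) * τ) ^ m := by positivity
    have hstep : (m:ℝ) * ζ * ((1 + π) * τ) ^ (m - 1) / m.factorial * τ
        ≤ ζ * (m * ((1 + π) * τ) ^ m) / m.factorial := by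
      rcases m with _ | k
      · simp
      · have hkk : ((1 + π) * τ) ^ (k + 1 - 1) * τ ≤ ((1 + π) * τ) ^ (k + 1) := by
          have : (k + 1 - 1) = k := rfl
          rw [this, pow_succ]
          apply mul_le_mul_of_nonneg_left (by nlinarith [mul_pos hπ hτ]) (by positivity)
        rw [div_mul_eq_mul_div, div_le_div_iff₀ hF hF]
        calc (k + 1 : ℕ) * ζ * ((1 + π) * τ) ^ (k + 1 - 1) * τ * (k + 1).factorial
            = (k + 1 : ℕ) * ζ * (((1 + π) * τ) ^ (k + 1 - 1) * τ) * (k + 1).factorial := by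
              ring
          _ ≤ (k + 1 : ℕ) * ζ * ((1 + π) * τ) ^ (k + 1) * (k + 1).factorial := by
              have : (0:ℝ) ≤ (k + 1 : ℕ) * ζ := by positivity
              have hFnn : (0:ℝ) ≤ ((k + 1).factorial : ℝ) := by positivity
              apply mul_le_mul_of_nonneg_right (mul_le_mul_of_nonneg_left hkk this) hFnn
          _ = ζ * ((k + 1 : ℕ) * ((1 + π) * τ) ^ (k + 1)) * (k + 1).factorial := by ring
    have hτM1 : M1 * τ ≤ C * Cconst * ζ * τ ^ m / m.factorial
        + ζ * (m * ((1 + π) * τ) ^ m) / m.factorial := by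
      rw [hM1def]
      have h1 : C * lam * ζ * (τ ^ m / m.factorial) * τ
          ≤ C * Cconst * ζ * τ ^ m / m.factorial := by
        have : C * lam * ζ * (τ ^ m / m.factorial) * τ
            = C * (lam * τ) * ζ * τ ^ m / m.factorial := by ring
        rw [this]
        gcongr
      have h2 := hstep
      nlinarith [h2]
    have hζm : ζ ^ m ≤ ((1 + π) * τ) ^ m := by
      apply pow_le_pow_left₀ hζ.le
      linarith [hζπτ, hτ.le]
    have hmlt : (m:ℝ) ≤ 2 ^ m := by
      exact_mod_cast (Nat.lt_two_pow_self (n := m)).le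
    have hmain2 : 2 * ‖∫ s in (0:ℝ)..τ, f s‖
        ≤ (C * Cconst + 3) * (2 * (1 + π)) ^ m * (ζ * τ ^ m / m.factorial) := by
      have h2m : (1:ℝ) ≤ 2 ^ m := by
        have := pow_le_pow_left₀ (show (0:ℝ) ≤ 1 by norm_num) (show (1:ℝ) ≤ 2 by norm_num) m
        simpa using this
      have e1 : C * Cconst * ζ * τ ^ m / m.factorial
          ≤ C * Cconst * (ζ * τ ^ m / m.factorial) * 2 ^ m := by
        have ha : (0:ℝ) ≤ C * Cconst * (ζ * τ ^ m / m.factorial) := by positivity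
        calc C * Cconst * ζ * τ ^ m / ↑m.factorial
            = C * Cconst * (ζ * τ ^ m / ↑m.factorial) * 1 := by ring
          _ ≤ C * Cconst * (ζ * τ ^ m / ↑m.factorial) * 2 ^ m :=
              mul_le_mul_of_nonneg_left h2m ha
      have hR1 : (1:ℝ) ≤ (1 + π) ^ m := by
        have := pow_le_pow_left₀ (show (0:ℝ) ≤ 1 by norm_num)
          (show (1:ℝ) ≤ 1 + π by linarith) m
        simpa using this
      have t1 : C * Cconst * ζ * τ ^ m / m.factorial
          ≤ C * Cconst * 2 ^ m * (ζ * τ ^ m / m.factorial) * (1 + π) ^ m := by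
        refine e1.trans ?_
        calc C * Cconst * (ζ * τ ^ m / ↑m.factorial) * 2 ^ m
            = C * Cconst * 2 ^ m * (ζ * τ ^ m / ↑m.factorial) * 1 := by ring
          _ ≤ C * Cconst * 2 ^ m * (ζ * τ ^ m / ↑m.factorial) * (1 + π) ^ m :=
              mul_le_mul_of_nonneg_left hR1 (by positivity)
      have e2 : ζ ^ m / m.factorial * ζ ≤ (1 + π) ^ m * (ζ * τ ^ m / m.factorial) := by
        have h := mul_le_mul_of_nonneg_right hζm
          (le_of_lt (show (0:ℝ) < ζ / m.factorial by positivity))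
        calc ζ ^ m / ↑m.factorial * ζ = ζ ^ m * (ζ / ↑m.factorial) := by ring
          _ ≤ ((1 + π) * τ) ^ m * (ζ / ↑m.factorial) := h
          _ = (1 + π) ^ m * (ζ * τ ^ m / ↑m.factorial) := by rw [mul_pow]; ring
      have t3 : (↑m + 2) * ((1 + π) ^ m * (ζ * τ ^ m / ↑m.factorial))
          ≤ 3 * 2 ^ m * ((1 + π) ^ m * (ζ * τ ^ m / ↑m.factorial)) :=
        mul_le_mul_of_nonneg_right (by linarith [hmlt, h2m]) (by positivity)
      have hmp : ((1 + π) * τ) ^ m = (1 + π) ^ m * τ ^ m := mul_pow _ _ m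
      rw [hmp] at h2I hτM1
      rw [show ((2 * (1 + π)) ^ m : ℝ) = 2 ^ m * (1 + π) ^ m by rw [mul_pow]]
      calc 2 * ‖∫ s in (0:ℝ)..τ, f s‖
          ≤ M1 * τ + ζ ^ m / ↑m.factorial * ζ
              + (1 + π) ^ m * τ ^ m / ↑m.factorial * ζ := h2I
        _ ≤ (C * Cconst * ζ * τ ^ m / ↑m.factorial
              + ζ * (↑m * ((1 + π) ^ m * τ ^ m)) / ↑m.factorial)
              + (1 + π) ^ m * (ζ * τ ^ m / ↑m.factorial)
              + (1 + π) ^ m * (ζ * τ ^ m / ↑m.factorial) := by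
            have h3 : (1 + π) ^ m * τ ^ m / ↑m.factorial * ζ
                = (1 + π) ^ m * (ζ * τ ^ m / ↑m.factorial) := by ring
            rw [h3]
            exact add_le_add (add_le_add hτM1 e2) le_rfl
        _ = C * Cconst * ζ * τ ^ m / ↑m.factorial
              + (↑m + 2) * ((1 + π) ^ m * (ζ * τ ^ m / ↑m.factorial)) := by ring
        _ ≤ C * Cconst * 2 ^ m * (ζ * τ ^ m / ↑m.factorial) * (1 + π) ^ m
              + 3 * 2 ^ m * ((1 + π) ^ m * (ζ * τ ^ m / ↑m.factorial)) := add_le_add t1 t3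
        _ = (C * Cconst + 3) * (2 ^ m * (1 + π) ^ m) * (ζ * τ ^ m / ↑m.factorial) := by ring
    rw [hcdef]
    linarith [hmain2]
  have hEτ : (0:ℝ) < |E| + τ⁻¹ := by positivity
  have hEinv : τ⁻¹ ≤ |E| := by rw [← one_div]; exact hE.le
  have hζD : ζ ≤ 2 * π / (|E| + τ⁻¹) := by
    rw [hζdef, div_le_div_iff₀ hEpos hEτ]
    nlinarith [mul_le_mul_of_nonneg_left hEinv hπ.le]
  constructor
  · calc ‖∫ s in (0:ℝ)..τ, f s‖
        ≤ c * (2 * (1 + π)) ^ m * (ζ * τ ^ m / m.factorial) := hmaster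
      _ ≤ K * (2 * K) ^ m * (ζ * τ ^ m / m.factorial) := by
          gcongr
          all_goals first
            | exact hcK
            | positivity
            | linarith [hπ4, hK9]
      _ = K ^ (m + 1) * ζ * (2 * τ) ^ m / m.factorial := by
          rw [pow_succ, mul_pow, mul_pow]; ring
  · calc ‖∫ s in (0:ℝ)..τ, f s‖
        ≤ c * (2 * (1 + π)) ^ m * (ζ * τ ^ m / m.factorial) := hmaster
      _ ≤ c * (2 * (1 + π)) ^ m * ((2 * π / (|E| + τ⁻¹)) * τ ^ m / m.factorial) := by
          gcongr
          all_goals first | exact hζD | positivity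
      _ = (2 * π * c) * (2 * (1 + π)) ^ m * (1 / (|E| + τ⁻¹) * τ ^ m / m.factorial) := by
          ring
      _ ≤ K * (K * K) ^ m * (1 / (|E| + τ⁻¹) * τ ^ m / m.factorial) := by
          gcongr
          all_goals first
            | exact h2πc
            | positivity
            | nlinarith [hK9, hπ4]
      _ = K ^ (m + 1) * (1 / (|E| + τ⁻¹)) * (K * τ) ^ m / m.factorial := by
          rw [pow_succ, mul_pow, mul_pow]; ring
end
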